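/- Let μ be a probability measure on the unit circle with infinite support, (Φ_n) its monic orthogonal polynomials, φ_n = Φ_n/‖Φ_n‖_μ its orthonormal polynomials, and α_n = -conj(Φ_{n+1}(0)) its Verblunsky coefficients. Fix 0 < γ < 1 and ζ = e^{iω} on the unit circle, and let ν = (1-γ)μ + γδ_ω. Then α_n(dν) = α_n + q_n^{-1} γ conj(φ_{n+1}(ζ)) ‖Φ_{n+1}‖_μ · Σ_{j=0}^{n} conj(φ_j(0)) φ_j(ζ), where K_n(ζ) = Σ_{j=0}^{n} |φ_j(ζ)|² and q_n = (1-γ) + γK_n(ζ). -/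

import Mathlib

open MeasureTheory Polynomial Finset

noncomputable section

/-- The `L²(μ)` inner product `⟨f,g⟩_μ = ∫ conj (f z) * g z dμ(z)`. -/
def mInner (μ : Measure ℂ) (f g : ℂ → ℂ) : ℂ :=
  ∫ z, (starRingEnd ℂ) (f z) * g z ∂μ

/-- The `L²(μ)` norm `‖f‖_μ = (∫ |f z|² dμ(z))^{1/2}`. -/
def mNorm (μ : Measure ℂ) (f : ℂ → ℂ) : ℝ :=
  Real.sqrt (∫ z, ‖f z‖ ^ 2 ∂μ)

/-- `Φ` is the family of monic orthogonal polynomials for `μ`: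
`Φ n` is monic of degree `n`, and distinct `Φ`'s are orthogonal in `L²(μ)`. -/
def IsMonicOPS (μ : Measure ℂ) (Φ : ℕ → Polynomial ℂ) : Prop :=
  (∀ n, (Φ n).Monic ∧ (Φ n).natDegree = n) ∧
    ∀ m n, m ≠ n →
      mInner μ (fun z => (Φ m).eval z) (fun z => (Φ n).eval z) = 0

/-- `μ` is a measure on the unit circle `∂𝔻 = {z : ℂ | |z| = 1}`. -/
def OnCircle (μ : Measure ℂ) : Prop := μ {z : ℂ | ‖z‖ = 1}ᶜ = 0

/-- The (closed) support of `μ` is an infinite set: every closed set of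
full measure is infinite. -/
def InfiniteSupport (μ : Measure ℂ) : Prop :=
  ∀ t : Set ℂ, IsClosed t → μ tᶜ = 0 → t.Infinite

namespace OPUCAux

/-- Polynomial inner product. -/
def pI (μ : Measure ℂ) (p q : Polynomial ℂ) : ℂ :=
  mInner μ (fun z => p.eval z) (fun z => q.eval z)

lemma conj_mul_self (z : ℂ) : (starRingEnd ℂ) z * z = ((‖z‖ ^ 2 : ℝ) : ℂ) := by
  rw [Complex.conj_mul']; push_cast; ring

lemma eval_norm_le (p : Polynomial ℂ) {z : ℂ} (hz : ‖z‖ = 1) :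
    ‖p.eval z‖ ≤ ∑ i ∈ Finset.range (p.natDegree + 1), ‖p.coeff i‖ := by
  rw [Polynomial.eval_eq_sum_range]
  refine (norm_sum_le _ _).trans ?_
  refine Finset.sum_le_sum fun i _ => ?_
  rw [norm_mul, norm_pow, hz, one_pow, mul_one]

lemma ae_circle {μ : Measure ℂ} (hc : OnCircle μ) : ∀ᵐ z ∂μ, ‖z‖ = 1 := by
  rw [ae_iff]; exact hc

lemma coeffSumNonneg (p : Polynomial ℂ) :
    0 ≤ ∑ i ∈ Finset.range (p.natDegree + 1), ‖p.coeff i‖ :=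
  Finset.sum_nonneg fun i _ => norm_nonneg _

lemma integrable_conj_mul (μ : Measure ℂ) [IsFiniteMeasure μ] (hc : OnCircle μ)
    (p q : Polynomial ℂ) :
    Integrable (fun z => (starRingEnd ℂ) (p.eval z) * q.eval z) μ := by
  refine Integrable.mono'
    (integrable_const ((∑ i ∈ Finset.range (p.natDegree + 1), ‖p.coeff i‖) *
      (∑ i ∈ Finset.range (q.natDegree + 1), ‖q.coeff i‖))) ?_ ?_
  · exact ((Complex.continuous_conj.comp p.continuous).mul q.continuous).aestronglyMeasurable
  · filter_upwards [ae_circle hc] with z hz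
    rw [norm_mul, RCLike.norm_conj]
    exact mul_le_mul (eval_norm_le p hz) (eval_norm_le q hz) (norm_nonneg _)
      (coeffSumNonneg p)

lemma integrable_sq (μ : Measure ℂ) [IsFiniteMeasure μ] (hc : OnCircle μ)
    (p : Polynomial ℂ) : Integrable (fun z => ‖p.eval z‖ ^ 2) μ := by
  have h := (integrable_conj_mul μ hc p p).norm
  refine h.congr (Filter.Eventually.of_forall fun z => ?_)
  simp only [norm_mul, RCLike.norm_conj, sq]

lemma pI_self (μ : Measure ℂ) (p : Polynomial ℂ) :
    pI μ p p = ((∫ z, ‖p.eval z‖ ^ 2 ∂μ : ℝ) : ℂ) := by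
  have h : ∫ z, ((‖p.eval z‖ ^ 2 : ℝ) : ℂ) ∂μ = ((∫ z, ‖p.eval z‖ ^ 2 ∂μ : ℝ) : ℂ) :=
    integral_ofReal
  rw [pI, mInner, ← h]
  exact integral_congr_ae (Filter.Eventually.of_forall fun z => conj_mul_self _)

lemma mNorm_sq (μ : Measure ℂ) (p : Polynomial ℂ) :
    (mNorm μ (fun z => p.eval z)) ^ 2 = ∫ z, ‖p.eval z‖ ^ 2 ∂μ :=
  Real.sq_sqrt (integral_nonneg fun z => sq_nonneg _)

lemma integral_sq_pos (μ : Measure ℂ) [IsFiniteMeasure μ] (hc : OnCircle μ)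
    (hs : InfiniteSupport μ) (p : Polynomial ℂ) (hp : p ≠ 0) :
    0 < ∫ z, ‖p.eval z‖ ^ 2 ∂μ := by
  rcases (integral_nonneg (f := fun z => ‖p.eval z‖ ^ 2) fun z => sq_nonneg ‖p.eval z‖).lt_or_eq with h | h
  · exact h
  exfalso
  have h0 := (integral_eq_zero_iff_of_nonneg (f := fun z => ‖p.eval z‖ ^ 2)
    (fun z => sq_nonneg ‖p.eval z‖) (integrable_sq μ hc p)).mp h.symm
  have hroot : μ {z : ℂ | p.IsRoot z}ᶜ = 0 := by
    rw [Filter.EventuallyEq, ae_iff] at h0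
    convert h0 using 2
    ext z
    simp [Polynomial.IsRoot, pow_eq_zero_iff, norm_eq_zero]
  have hcl : IsClosed {z : ℂ | p.IsRoot z} := isClosed_eq p.continuous continuous_const
  exact hp (p.eq_zero_of_infinite_isRoot (hs _ hcl hroot))

lemma mNorm_pos (μ : Measure ℂ) [IsFiniteMeasure μ] (hc : OnCircle μ)
    (hs : InfiniteSupport μ) (p : Polynomial ℂ) (hp : p ≠ 0) :
    0 < mNorm μ (fun z => p.eval z) :=
  Real.sqrt_pos.mpr (integral_sq_pos μ hc hs p hp)

lemma pI_smul_right (μ : Measure ℂ) (p q : Polynomial ℂ) (c : ℂ) :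
    pI μ p (c • q) = c * pI μ p q := by
  rw [pI, pI, mInner, mInner, ← integral_const_mul]
  refine integral_congr_ae (Filter.Eventually.of_forall fun z => ?_)
  simp only [Polynomial.eval_smul, smul_eq_mul]; ring

lemma pI_smul_left (μ : Measure ℂ) (p q : Polynomial ℂ) (c : ℂ) :
    pI μ (c • p) q = (starRingEnd ℂ) c * pI μ p q := by
  rw [pI, pI, mInner, mInner, ← integral_const_mul]
  refine integral_congr_ae (Filter.Eventually.of_forall fun z => ?_)
  simp only [Polynomial.eval_smul, smul_eq_mul, map_mul]; ring

lemma pI_add_right (μ : Measure ℂ) [IsFiniteMeasure μ] (hc : OnCircle μ)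
    (p q r : Polynomial ℂ) : pI μ p (q + r) = pI μ p q + pI μ p r := by
  rw [pI, pI, pI, mInner, mInner, mInner, ← integral_add (integrable_conj_mul μ hc p q)
    (integrable_conj_mul μ hc p r)]
  refine integral_congr_ae (Filter.Eventually.of_forall fun z => ?_)
  simp only [Polynomial.eval_add]; ring

lemma pI_add_left (μ : Measure ℂ) [IsFiniteMeasure μ] (hc : OnCircle μ)
    (p q r : Polynomial ℂ) : pI μ (p + q) r = pI μ p r + pI μ q r := by
  rw [pI, pI, pI, mInner, mInner, mInner, ← integral_add (integrable_conj_mul μ hc p r)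
    (integrable_conj_mul μ hc q r)]
  refine integral_congr_ae (Filter.Eventually.of_forall fun z => ?_)
  simp only [Polynomial.eval_add, map_add]; ring

lemma pI_zero_right (μ : Measure ℂ) (p : Polynomial ℂ) : pI μ p 0 = 0 := by
  simp [pI, mInner]

lemma pI_zero_left (μ : Measure ℂ) (p : Polynomial ℂ) : pI μ 0 p = 0 := by
  simp [pI, mInner]

lemma pI_sub_right (μ : Measure ℂ) [IsFiniteMeasure μ] (hc : OnCircle μ)
    (p q r : Polynomial ℂ) : pI μ p (q - r) = pI μ p q - pI μ p r := by
  have h := pI_add_right μ hc p (q - r) r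
  rw [sub_add_cancel] at h
  rw [eq_sub_iff_add_eq]
  exact h.symm

lemma pI_sum_right (μ : Measure ℂ) [IsFiniteMeasure μ] (hc : OnCircle μ)
    (p : Polynomial ℂ) (s : Finset ℕ) (f : ℕ → Polynomial ℂ) :
    pI μ p (∑ k ∈ s, f k) = ∑ k ∈ s, pI μ p (f k) := by
  classical
  induction s using Finset.induction with
  | empty => simp [pI_zero_right]
  | insert _ _ h ih =>
    rw [Finset.sum_insert h, Finset.sum_insert h, pI_add_right μ hc, ih]

lemma pI_sum_left (μ : Measure ℂ) [IsFiniteMeasure μ] (hc : OnCircle μ)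
    (p : Polynomial ℂ) (s : Finset ℕ) (f : ℕ → Polynomial ℂ) :
    pI μ (∑ k ∈ s, f k) p = ∑ k ∈ s, pI μ (f k) p := by
  classical
  induction s using Finset.induction with
  | empty => simp [pI_zero_left]
  | insert _ _ h ih =>
    rw [Finset.sum_insert h, Finset.sum_insert h, pI_add_left μ hc, ih]

lemma integrable_dirac' (f : ℂ → ℂ) (a : ℂ) (hf : AEStronglyMeasurable f (Measure.dirac a)) :
    Integrable f (Measure.dirac a) := by
  have h : f =ᵐ[Measure.dirac a] fun _ => f a := by
    rw [Filter.EventuallyEq, ae_dirac_eq]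
    exact Filter.eventually_pure.2 rfl
  exact (integrable_const (f a)).congr h.symm

/-- Decomposition of the inner product for `ν = (1-γ)μ + γ δ_ζ`. -/
lemma pI_combo (μ : Measure ℂ) [IsFiniteMeasure μ] (hc : OnCircle μ) (γ : ℝ)
    (h0 : 0 ≤ γ) (h1 : γ ≤ 1) (ζ : ℂ) (p q : Polynomial ℂ) :
    pI (ENNReal.ofReal (1 - γ) • μ + ENNReal.ofReal γ • Measure.dirac ζ) p q
      = ((1 - γ : ℝ) : ℂ) * pI μ p q
        + (γ : ℂ) * ((starRingEnd ℂ) (p.eval ζ) * q.eval ζ) := by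
  have hcont : Continuous fun z => (starRingEnd ℂ) (p.eval z) * q.eval z :=
    (Complex.continuous_conj.comp p.continuous).mul q.continuous
  have hdi : Integrable (fun z => (starRingEnd ℂ) (p.eval z) * q.eval z) (Measure.dirac ζ) :=
    integrable_dirac' _ _ hcont.aestronglyMeasurable
  rw [pI, mInner, integral_add_measure
      ((integrable_conj_mul μ hc p q).smul_measure ENNReal.ofReal_ne_top)
      (hdi.smul_measure ENNReal.ofReal_ne_top),
    integral_smul_measure, integral_smul_measure, integral_dirac,
    ENNReal.toReal_ofReal (by linarith), ENNReal.toReal_ofReal h0]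
  rw [pI, mInner]
  simp only [Complex.real_smul]

/-- Any polynomial of degree ≤ n is a combination of a monic triangular family. -/
lemma span_monic (Φ : ℕ → Polynomial ℂ) (h : ∀ n, (Φ n).Monic ∧ (Φ n).natDegree = n) :
    ∀ (n : ℕ) (p : Polynomial ℂ), p.natDegree ≤ n →
      ∃ c : ℕ → ℂ, p = ∑ k ∈ Finset.range (n + 1), c k • Φ k := by
  intro n
  induction n with
  | zero =>
    intro p hp
    refine ⟨fun _ => p.coeff 0, ?_⟩
    have h0 : Φ 0 = 1 := (h 0).1.natDegree_eq_zero.mp (h 0).2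
    rw [Finset.sum_range_one, h0, smul_eq_C_mul, mul_one]
    exact Polynomial.eq_C_of_natDegree_le_zero hp
  | succ m ih =>
    intro p hp
    have hq : (p - p.coeff (m + 1) • Φ (m + 1)).natDegree ≤ m := by
      rw [natDegree_le_iff_coeff_eq_zero]
      intro N hN
      simp only [coeff_sub, Polynomial.coeff_smul, smul_eq_mul]
      rcases eq_or_lt_of_le (Nat.succ_le_of_lt hN) with hEq | hLt
      · subst hEq
        have h1 : (Φ (m + 1)).coeff (m + 1) = 1 := by
          have h2 := (h (m + 1)).1.coeff_natDegree
          rwa [(h (m + 1)).2] at h2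
        rw [h1, mul_one, sub_self]
      · have h1 : p.coeff N = 0 := coeff_eq_zero_of_natDegree_lt (lt_of_le_of_lt hp hLt)
        have h2 : (Φ (m + 1)).coeff N = 0 := by
          refine coeff_eq_zero_of_natDegree_lt ?_
          rw [(h (m + 1)).2]; exact hLt
        rw [h1, h2, mul_zero, sub_zero]
    obtain ⟨c, hc⟩ := ih _ hq
    refine ⟨Function.update c (m + 1) (p.coeff (m + 1)), ?_⟩
    rw [Finset.sum_range_succ, Function.update_self]
    have hcong : ∑ k ∈ Finset.range (m + 1), Function.update c (m + 1) (p.coeff (m + 1)) k • Φ k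
        = ∑ k ∈ Finset.range (m + 1), c k • Φ k := by
      refine Finset.sum_congr rfl fun k hk => ?_
      rw [Function.update_of_ne (Finset.mem_range.mp hk).ne]
    rw [hcong, ← hc, sub_add_cancel]

end OPUCAux

open OPUCAux

/-- Formula (2.25)/(3.1):
`α_n(dν) = α_n + q_n⁻¹ γ conj(φ_{n+1}(ζ)) ‖Φ_{n+1}‖ Σ_{j=0}^n conj(φ_j(0)) φ_j(ζ)`. -/
theorem verblunsky_insert_point_mass_kernel_form
    (μ : Measure ℂ) [IsProbabilityMeasure μ] (hcirc : OnCircle μ)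
    (hsupp : InfiniteSupport μ)
    (Φ : ℕ → Polynomial ℂ) (hΦ : IsMonicOPS μ Φ)
    (φ : ℕ → ℂ → ℂ)
    (hφ : ∀ m z, φ m z = (Φ m).eval z / (mNorm μ (fun w => (Φ m).eval w) : ℂ))
    (α : ℕ → ℂ) (hα : ∀ n, α n = -(starRingEnd ℂ) ((Φ (n + 1)).eval 0))
    (γ : ℝ) (hγ0 : 0 < γ) (hγ1 : γ < 1)
    (ω : ℝ) (ζ : ℂ) (hζ : ζ = Complex.exp (ω * Complex.I))
    (ν : Measure ℂ)
    (hν : ν = ENNReal.ofReal (1 - γ) • μ + ENNReal.ofReal γ • Measure.dirac ζ)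
    (Ψ : ℕ → Polynomial ℂ) (hΨ : IsMonicOPS ν Ψ)
    (αν : ℕ → ℂ) (hαν : ∀ n, αν n = -(starRingEnd ℂ) ((Ψ (n + 1)).eval 0))
    (K : ℕ → ℝ) (hK : ∀ n, K n = ∑ j ∈ Finset.range (n + 1), ‖φ j ζ‖ ^ 2)
    (q : ℕ → ℝ) (hq : ∀ n, q n = (1 - γ) + γ * K n)
    (n : ℕ) :
    αν n = α n + ((q n : ℝ) : ℂ)⁻¹ * (γ : ℂ) * (starRingEnd ℂ) (φ (n + 1) ζ) *
        ((mNorm μ (fun w => (Φ (n + 1)).eval w) : ℝ) : ℂ) *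
        ∑ j ∈ Finset.range (n + 1), (starRingEnd ℂ) (φ j 0) * φ j ζ := by
  classical
  obtain ⟨hΦdeg, hΦorth⟩ := hΦ
  obtain ⟨hΨdeg, hΨorth⟩ := hΨ
  have hζ1 : ‖ζ‖ = 1 := by
    rw [hζ]; simp [Complex.norm_exp]
  have hγle : 0 ≤ γ := le_of_lt hγ0
  have hγle1 : γ ≤ 1 := le_of_lt hγ1
  have h1γ : 0 < 1 - γ := by linarith
  -- ν is a finite measure on the circle with infinite support
  haveI hνfin : IsFiniteMeasure ν := by
    rw [hν]
    constructor
    simp only [Measure.add_apply, Measure.smul_apply, smul_eq_mul]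
    exact ENNReal.add_lt_top.mpr
      ⟨ENNReal.mul_lt_top ENNReal.ofReal_lt_top (measure_lt_top μ _),
       ENNReal.mul_lt_top ENNReal.ofReal_lt_top (measure_lt_top _ _)⟩
  have hcircmeas : MeasurableSet {z : ℂ | ‖z‖ = 1} :=
    (isClosed_eq continuous_norm continuous_const).measurableSet
  have hνcirc : OnCircle ν := by
    rw [OnCircle, hν]
    simp only [Measure.add_apply, Measure.smul_apply, smul_eq_mul]
    rw [hcirc, Measure.dirac_apply' _ hcircmeas.compl]
    have hmem : ζ ∉ {z : ℂ | ‖z‖ = 1}ᶜ := fun h => h hζ1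
    rw [Set.indicator_of_notMem hmem]
    simp
  have hνsupp : InfiniteSupport ν := by
    intro t ht h0
    refine hsupp t ht ?_
    rw [hν] at h0
    simp only [Measure.add_apply, Measure.smul_apply, smul_eq_mul] at h0
    have := add_eq_zero.mp h0
    rcases mul_eq_zero.mp this.1 with h | h
    · exact absurd h (by simp [ENNReal.ofReal_eq_zero]; linarith)
    · exact h
  -- abbreviations
  set N : ℕ → ℝ := fun m => mNorm μ (fun w => (Φ m).eval w) with hNdef
  have hNsq : ∀ m, (N m) ^ 2 = ∫ z, ‖(Φ m).eval z‖ ^ 2 ∂μ := fun m => mNorm_sq μ (Φ m)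
  have hNpos : ∀ m, 0 < N m := fun m =>
    mNorm_pos μ hcirc hsupp (Φ m) (hΦdeg m).1.ne_zero
  have hNne : ∀ m, ((N m : ℝ) : ℂ) ≠ 0 := fun m =>
    Complex.ofReal_ne_zero.mpr (ne_of_gt (hNpos m))
  have hNsqne : ∀ m, (((N m) ^ 2 : ℝ) : ℂ) ≠ 0 := fun m =>
    Complex.ofReal_ne_zero.mpr (by have := hNpos m; positivity)
  have hφ' : ∀ m z, φ m z = (Φ m).eval z / ((N m : ℝ) : ℂ) := hφ
  have hK0 : 0 ≤ K n := by
    rw [hK]; exact Finset.sum_nonneg fun j _ => sq_nonneg _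
  have hqpos : 0 < q n := by rw [hq]; nlinarith
  have hqne : ((q n : ℝ) : ℂ) ≠ 0 := Complex.ofReal_ne_zero.mpr (ne_of_gt hqpos)
  -- inner products of the Φ's
  have horthμ : ∀ j k, j ≠ k → pI μ (Φ j) (Φ k) = 0 := hΦorth
  have horthν : ∀ j k, j ≠ k → pI ν (Ψ j) (Ψ k) = 0 := hΨorth
  have hself : ∀ m, pI μ (Φ m) (Φ m) = (((N m) ^ 2 : ℝ) : ℂ) := by
    intro m; rw [pI_self μ (Φ m), hNsq]
  -- the perturbing polynomial
  set c : ℂ := (γ : ℂ) * (Φ (n + 1)).eval ζ / ((q n : ℝ) : ℂ) with hcdef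
  set coefs : ℕ → ℂ :=
    fun j => c * (starRingEnd ℂ) ((Φ j).eval ζ) / (((N j) ^ 2 : ℝ) : ℂ) with hcoefs
  set S : Polynomial ℂ := ∑ j ∈ Finset.range (n + 1), coefs j • Φ j with hSdef
  set P : Polynomial ℂ := Φ (n + 1) - S with hPdef
  have hSdeg : S.natDegree ≤ n := by
    refine natDegree_sum_le_of_forall_le _ _ fun j hj => ?_
    refine (natDegree_smul_le _ _).trans ?_
    rw [(hΦdeg j).2]
    exact Nat.lt_succ_iff.mp (Finset.mem_range.mp hj)
  -- K in Φ form
  have hKform : ((K n : ℝ) : ℂ)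
      = ∑ j ∈ Finset.range (n + 1),
          (starRingEnd ℂ) ((Φ j).eval ζ) * (Φ j).eval ζ / (((N j) ^ 2 : ℝ) : ℂ) := by
    rw [hK, Complex.ofReal_sum]
    refine Finset.sum_congr rfl fun j _ => ?_
    rw [conj_mul_self, ← Complex.ofReal_div]
    congr 1
    rw [hφ' j, norm_div, Complex.norm_real, Real.norm_eq_abs, abs_of_pos (hNpos j), div_pow]
  -- evaluation of P at ζ
  have hSζ : S.eval ζ = c * ((K n : ℝ) : ℂ) := by
    rw [hSdef, eval_finset_sum, hKform, Finset.mul_sum]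
    refine Finset.sum_congr rfl fun j _ => ?_
    rw [Polynomial.eval_smul, smul_eq_mul, hcoefs]
    field_simp
  -- orthogonality of P to each Φ k, k ≤ n, in L²(ν)
  have horthP : ∀ k ∈ Finset.range (n + 1), pI ν (Φ k) P = 0 := by
    intro k hk
    have hkn : k ≠ n + 1 := by
      have := Finset.mem_range.mp hk; omega
    have hμP : pI μ (Φ k) P = -(coefs k * (((N k) ^ 2 : ℝ) : ℂ)) := by
      rw [hPdef, pI_sub_right μ hcirc, horthμ k (n + 1) hkn, hSdef,
        pI_sum_right μ hcirc, zero_sub, neg_inj]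
      rw [Finset.sum_eq_single k]
      · rw [pI_smul_right, hself k]
      · intro b hb hbk
        rw [pI_smul_right, horthμ k b (Ne.symm hbk), mul_zero]
      · intro hkk; exact absurd hk hkk
    have hPζeval : P.eval ζ = (Φ (n + 1)).eval ζ - c * ((K n : ℝ) : ℂ) := by
      rw [hPdef, eval_sub, hSζ]
    rw [hν, pI_combo μ hcirc γ hγle hγle1 ζ, hμP, hPζeval]
    have hck : coefs k * (((N k) ^ 2 : ℝ) : ℂ) = c * (starRingEnd ℂ) ((Φ k).eval ζ) := by
      rw [hcoefs]
      exact div_mul_cancel₀ _ (hNsqne k)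
    have hqC : ((q n : ℝ) : ℂ) = ((1 - γ : ℝ) : ℂ) + (γ : ℂ) * ((K n : ℝ) : ℂ) := by
      rw [hq]; push_cast; ring
    have hcq : c * ((q n : ℝ) : ℂ) = (γ : ℂ) * (Φ (n + 1)).eval ζ := by
      rw [hcdef]; field_simp
    rw [hck]
    linear_combination (-(starRingEnd ℂ) ((Φ k).eval ζ)) * hcq +
      (c * (starRingEnd ℂ) ((Φ k).eval ζ)) * hqC
  -- orthogonality of P to all polynomials of degree ≤ n in L²(ν)
  have horthP' : ∀ p : Polynomial ℂ, p.natDegree ≤ n → pI ν p P = 0 := by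
    intro p hp
    obtain ⟨d, hd⟩ := span_monic Φ hΦdeg n p hp
    rw [hd, pI_sum_left ν hνcirc]
    refine Finset.sum_eq_zero fun k hk => ?_
    rw [pI_smul_left, horthP k hk, mul_zero]
  -- P is the (n+1)-st monic orthogonal polynomial of ν
  have hPmonic : P.Monic := by
    have hdeg : (-S).degree < (Φ (n + 1)).degree := by
      rcases eq_or_ne S 0 with h | h
      · rw [h, neg_zero, Polynomial.degree_zero]
        exact lt_of_lt_of_le (WithBot.bot_lt_iff_ne_bot.mpr
          (Polynomial.degree_eq_bot.not.mpr (hΦdeg (n+1)).1.ne_zero)) le_rfl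
      · rw [Polynomial.degree_neg]
        calc S.degree ≤ (S.natDegree : WithBot ℕ) := Polynomial.degree_le_natDegree
          _ ≤ (n : WithBot ℕ) := by exact_mod_cast hSdeg
          _ < ((n + 1 : ℕ) : WithBot ℕ) := by exact_mod_cast Nat.lt_succ_self n
          _ = (Φ (n + 1)).degree := by
              rw [Polynomial.degree_eq_natDegree (hΦdeg (n+1)).1.ne_zero, (hΦdeg (n+1)).2]
    have := (hΦdeg (n + 1)).1.add_of_left hdeg
    rwa [← sub_eq_add_neg] at this
  have hPnd : P.natDegree = n + 1 := by
    rw [hPdef]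
    rw [Polynomial.natDegree_sub_eq_left_of_natDegree_lt]
    · exact (hΦdeg (n + 1)).2
    · rw [(hΦdeg (n + 1)).2]; omega
  have hDdeg : (Ψ (n + 1) - P).natDegree ≤ n := by
    rw [natDegree_le_iff_coeff_eq_zero]
    intro N' hN'
    simp only [coeff_sub]
    rcases eq_or_lt_of_le (Nat.succ_le_of_lt hN') with hEq | hLt
    · subst hEq
      have h1 : (Ψ (n + 1)).coeff (n + 1) = 1 := by
        have h2 := (hΨdeg (n + 1)).1.coeff_natDegree
        rwa [(hΨdeg (n + 1)).2] at h2
      have h2 : P.coeff (n + 1) = 1 := by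
        have h3 := hPmonic.coeff_natDegree
        rwa [hPnd] at h3
      rw [h1, h2, sub_self]
    · have h1 : (Ψ (n + 1)).coeff N' = 0 :=
        coeff_eq_zero_of_natDegree_lt (by rw [(hΨdeg (n + 1)).2]; exact hLt)
      have h2 : P.coeff N' = 0 := coeff_eq_zero_of_natDegree_lt (by rw [hPnd]; exact hLt)
      rw [h1, h2, sub_zero]
  have hDP : pI ν (Ψ (n + 1) - P) P = 0 := horthP' _ hDdeg
  have hDΨ : pI ν (Ψ (n + 1) - P) (Ψ (n + 1)) = 0 := by
    obtain ⟨d, hd⟩ := span_monic Ψ hΨdeg n _ hDdeg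
    rw [hd, pI_sum_left ν hνcirc]
    refine Finset.sum_eq_zero fun k hk => ?_
    have hkn : k ≠ n + 1 := by
      have := Finset.mem_range.mp hk; omega
    rw [pI_smul_left, horthν k (n + 1) hkn, mul_zero]
  have hDD : pI ν (Ψ (n + 1) - P) (Ψ (n + 1) - P) = 0 := by
    rw [pI_sub_right ν hνcirc, hDΨ, hDP, sub_zero]
  have hPΨ : Ψ (n + 1) = P := by
    by_contra hne
    have hD0 : Ψ (n + 1) - P ≠ 0 := sub_ne_zero.mpr hne
    have hpos := integral_sq_pos ν hνcirc hνsupp _ hD0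
    rw [pI_self ν _] at hDD
    exact absurd (Complex.ofReal_eq_zero.mp hDD) (ne_of_gt hpos)
  -- final computation
  rw [hαν, hPΨ, hPdef, eval_sub, map_sub, neg_sub, hα]
  rw [sub_eq_add_neg, add_comm]
  congr 1
  have hNrfl : mNorm μ (fun w => (Φ (n + 1)).eval w) = N (n + 1) := rfl
  rw [hNrfl]
  have hA : ((q n : ℝ) : ℂ)⁻¹ * (γ : ℂ) * (starRingEnd ℂ) (φ (n + 1) ζ) * ((N (n + 1) : ℝ) : ℂ)
      = (starRingEnd ℂ) c := by
    rw [hφ' (n + 1), hcdef]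
    simp only [map_div₀, map_mul, Complex.conj_ofReal]
    field_simp
    rw [mul_div_assoc, div_self (hNne (n + 1)), mul_one]
  rw [hA, hSdef, eval_finset_sum, map_sum, Finset.mul_sum]
  refine Finset.sum_congr rfl fun j hj => ?_
  rw [Polynomial.eval_smul, smul_eq_mul, map_mul, hcoefs, hφ' j, hφ' j]
  simp only [map_div₀, map_mul, Complex.conj_ofReal]
  push_cast
  field_simp
  rw [Complex.conj_conj]
  ring
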